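/- For every k ≥ 1, the family of unions of neighborhoods across the cut (A(H_k), B(H_k)) of the Hsu graph H_k consists exactly of the initial segments: {N(Y) : Y ⊆ A(H_k)} = { {b_1,…,b_l} : 0 ≤ l ≤ k }. In particular this family has exactly k+1 members, so the boolean-cut value β_{H_k}(A(H_k)) equals log₂(k+1) (the paper's Lemma 2 records this as β_{H_k}(A(H_k)) = log k). -/

import Mathlib

open Classical in
/-- The cut matrix of `A`: rows indexed by `A`, columns by its complement, over GF(2),
with `(x,y)` entry `1` iff `x` and `y` are adjacent. -/
noncomputable def cutMatrix {V : Type*} [Fintype V] [DecidableEq V]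
    (G : SimpleGraph V) (A : Finset V) : Matrix ↥A ↥(Aᶜ) (ZMod 2) :=
  Matrix.of fun x y => if G.Adj x.1 y.1 then 1 else 0

/-- The cut-rank `ρ_G(A)`: the GF(2)-rank of the cut matrix of `A`. -/
noncomputable def cutRank {V : Type*} [Fintype V] [DecidableEq V]
    (G : SimpleGraph V) (A : Finset V) : ℕ :=
  (cutMatrix G A).rank

/-- The union-count `U_G(A)`: the number of distinct sets `N(Y) \ A` over `Y ⊆ A`. -/
noncomputable def unionCount {V : Type*} [Fintype V] [DecidableEq V]
    (G : SimpleGraph V) (A : Finset V) : ℕ :=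
  Set.ncard {S : Set V | ∃ Y : Set V, Y ⊆ ↑A ∧ (⋃ y ∈ Y, G.neighborSet y) \ ↑A = S}

/-- `nss_G(A)`: the number of distinct GF(2)-linear spans of subsets of rows of the
cut matrix of `A`. -/
noncomputable def nss {V : Type*} [Fintype V] [DecidableEq V]
    (G : SimpleGraph V) (A : Finset V) : ℕ :=
  Set.ncard {W : Submodule (ZMod 2) (↥(Aᶜ) → ZMod 2) |
    ∃ S : Set ↥A, W = Submodule.span (ZMod 2) ((fun x => cutMatrix G A x) '' S)}

/-- The Hsu graph `H_k`: a bipartite graph with color classes `A(H_k)` (the left copies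
`Sum.inl i` for `i : Fin (k+1)`) and `B(H_k)` (the right copies `Sum.inr j`), where
`a_i` is adjacent to `b_j` iff `j < i` (0-indexed; so `N(a_0) = ∅` and
`N(a_i) = {b_0, …, b_{i-1}}`). -/
def hsuGraph (k : ℕ) : SimpleGraph (Fin (k + 1) ⊕ Fin (k + 1)) where
  Adj x y :=
    (∃ i j : Fin (k + 1), x = Sum.inl i ∧ y = Sum.inr j ∧ (j : ℕ) < (i : ℕ)) ∨
    (∃ i j : Fin (k + 1), x = Sum.inr j ∧ y = Sum.inl i ∧ (j : ℕ) < (i : ℕ))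
  symm := by
    refine ⟨?_⟩
    rintro x y (⟨i, j, rfl, rfl, h⟩ | ⟨i, j, rfl, rfl, h⟩)
    · exact Or.inr ⟨i, j, rfl, rfl, h⟩
    · exact Or.inl ⟨i, j, rfl, rfl, h⟩
  loopless := by
    refine ⟨?_⟩
    rintro x (⟨i, j, rfl, h, -⟩ | ⟨i, j, rfl, h, -⟩) <;> simp at h

/-- The color class `A(H_k)` of the Hsu graph, as a finset. -/
def hsuLeft (k : ℕ) : Finset (Fin (k + 1) ⊕ Fin (k + 1)) :=
  Finset.univ.filter (fun x => x.isLeft)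

lemma mem_hsuLeft_iff {k : ℕ} (x : Fin (k+1) ⊕ Fin (k+1)) :
    x ∈ hsuLeft k ↔ x.isLeft := by simp [hsuLeft]

lemma hsu_segments (k : ℕ) :
    {S : Set (Fin (k + 1) ⊕ Fin (k + 1)) |
        ∃ Y : Set (Fin (k + 1) ⊕ Fin (k + 1)), Y ⊆ ↑(hsuLeft k) ∧
          (⋃ y ∈ Y, (hsuGraph k).neighborSet y) = S} =
      {S : Set (Fin (k + 1) ⊕ Fin (k + 1)) |
        ∃ l : ℕ, l ≤ k ∧
          S = {z | ∃ j : Fin (k + 1), z = Sum.inr j ∧ (j : ℕ) < l}} := by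
  ext S
  simp only [Set.mem_setOf_eq]
  constructor
  · rintro ⟨Y, hY, rfl⟩
    classical
    set T : Finset (Fin (k+1)) := Finset.univ.filter (fun i => Sum.inl i ∈ Y) with hT
    refine ⟨T.sup (fun i => (i : ℕ)), Finset.sup_le (fun i _ => Nat.lt_succ_iff.mp i.isLt), ?_⟩
    ext z
    simp only [Set.mem_iUnion, SimpleGraph.mem_neighborSet, Set.mem_setOf_eq]
    constructor
    · rintro ⟨y, hyY, hadj⟩
      obtain (⟨i, j, rfl, rfl, hlt⟩ | ⟨i, j, rfl, hzy, hlt⟩) := hadj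
      · refine ⟨j, rfl, ?_⟩
        rw [Finset.lt_sup_iff]
        exact ⟨i, by simp [hT, hyY], hlt⟩
      · have := hY hyY
        simp [hsuLeft] at this
    · rintro ⟨j, rfl, hj⟩
      rw [Finset.lt_sup_iff] at hj
      obtain ⟨i, hiT, hji⟩ := hj
      rw [hT, Finset.mem_filter] at hiT
      exact ⟨Sum.inl i, hiT.2, Or.inl ⟨i, j, rfl, rfl, hji⟩⟩
  · rintro ⟨l, hl, rfl⟩
    refine ⟨{Sum.inl (⟨l, by omega⟩ : Fin (k+1))}, ?_, ?_⟩
    · intro x hx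
      rw [Set.mem_singleton_iff] at hx
      subst hx
      simp [mem_hsuLeft_iff]
    · ext z
      simp only [Set.mem_iUnion, SimpleGraph.mem_neighborSet, Set.mem_singleton_iff,
        Set.mem_setOf_eq]
      constructor
      · rintro ⟨y, rfl, hadj⟩
        obtain (⟨i, j, hi, rfl, hlt⟩ | ⟨i, j, hi, hzy, hlt⟩) := hadj
        · obtain rfl := Sum.inl_injective hi
          exact ⟨j, rfl, by simpa using hlt⟩
        · simp at hi
      · rintro ⟨j, rfl, hj⟩
        exact ⟨_, rfl, Or.inl ⟨⟨l, by omega⟩, j, rfl, rfl, hj⟩⟩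

theorem hsuGraph_unions_eq_initial_segments (k : ℕ) (hk : 1 ≤ k) :
    ({S : Set (Fin (k + 1) ⊕ Fin (k + 1)) |
        ∃ Y : Set (Fin (k + 1) ⊕ Fin (k + 1)), Y ⊆ ↑(hsuLeft k) ∧
          (⋃ y ∈ Y, (hsuGraph k).neighborSet y) = S} =
      {S : Set (Fin (k + 1) ⊕ Fin (k + 1)) |
        ∃ l : ℕ, l ≤ k ∧
          S = {z | ∃ j : Fin (k + 1), z = Sum.inr j ∧ (j : ℕ) < l}}) ∧
    unionCount (hsuGraph k) (hsuLeft k) = k + 1 := by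
  refine ⟨hsu_segments k, ?_⟩
  have hdiff : ∀ Y : Set (Fin (k+1) ⊕ Fin (k+1)), Y ⊆ ↑(hsuLeft k) →
      (⋃ y ∈ Y, (hsuGraph k).neighborSet y) \ ↑(hsuLeft k)
        = ⋃ y ∈ Y, (hsuGraph k).neighborSet y := by
    intro Y hY
    apply sdiff_eq_left.mpr
    rw [Set.disjoint_left]
    intro z hz2 hz1
    simp only [Set.mem_iUnion, SimpleGraph.mem_neighborSet] at hz2
    obtain ⟨y, hyY, hadj⟩ := hz2
    simp only [Finset.coe_filter, hsuLeft, Finset.mem_coe, Finset.mem_filter] at hz1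
    replace hz1 := hz1.2
    obtain (⟨i, j, hy, rfl, -⟩ | ⟨i, j, hy, rfl, -⟩) := hadj
    · simp at hz1
    · subst hy; simpa [hsuLeft] using hY hyY
  have hset : {S : Set (Fin (k+1) ⊕ Fin (k+1)) | ∃ Y : Set (Fin (k+1) ⊕ Fin (k+1)), Y ⊆ ↑(hsuLeft k) ∧
      (⋃ y ∈ Y, (hsuGraph k).neighborSet y) \ ↑(hsuLeft k) = S}
      = {S | ∃ Y : Set (Fin (k+1) ⊕ Fin (k+1)), Y ⊆ ↑(hsuLeft k) ∧ (⋃ y ∈ Y, (hsuGraph k).neighborSet y) = S} := by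
    ext S
    simp only [Set.mem_setOf_eq]
    constructor
    · rintro ⟨Y, hY, rfl⟩; exact ⟨Y, hY, (hdiff Y hY).symm⟩
    · rintro ⟨Y, hY, rfl⟩; exact ⟨Y, hY, hdiff Y hY⟩
  rw [unionCount, hset, hsu_segments k]
  have himg : {S : Set (Fin (k + 1) ⊕ Fin (k + 1)) |
        ∃ l : ℕ, l ≤ k ∧
          S = {z | ∃ j : Fin (k + 1), z = Sum.inr j ∧ (j : ℕ) < l}}
      = (fun l : ℕ => {z : Fin (k+1) ⊕ Fin (k+1) |
          ∃ j : Fin (k + 1), z = Sum.inr j ∧ (j : ℕ) < l}) '' (Set.Iic k) := by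
    ext S
    simp only [Set.mem_image, Set.mem_setOf_eq, Set.mem_Iic]
    constructor
    · rintro ⟨l, hl, rfl⟩; exact ⟨l, hl, rfl⟩
    · rintro ⟨l, hl, rfl⟩; exact ⟨l, hl, rfl⟩
  rw [himg]
  rw [Set.ncard_image_of_injOn]
  · have : Set.Iic k = ↑(Finset.Iic k) := by simp
    rw [this, Set.ncard_coe_finset]
    simp
  · have key : ∀ a b : ℕ, a < b → b ≤ k →
        (fun l : ℕ => {z : Fin (k+1) ⊕ Fin (k+1) |
          ∃ j : Fin (k + 1), z = Sum.inr j ∧ (j : ℕ) < l}) a ≠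
        (fun l : ℕ => {z : Fin (k+1) ⊕ Fin (k+1) |
          ∃ j : Fin (k + 1), z = Sum.inr j ∧ (j : ℕ) < l}) b := by
      intro a b hab hbk heq
      have hab' : a < k + 1 := by omega
      have hm : (Sum.inr (⟨a, hab'⟩ : Fin (k+1)) : Fin (k+1) ⊕ Fin (k+1)) ∈
          (fun l : ℕ => {z : Fin (k+1) ⊕ Fin (k+1) |
            ∃ j : Fin (k + 1), z = Sum.inr j ∧ (j : ℕ) < l}) b :=
        ⟨⟨a, hab'⟩, rfl, hab⟩
      rw [← heq] at hm
      obtain ⟨j, hj, hjl⟩ := hm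
      obtain rfl := Sum.inr_injective hj
      simp at hjl
    intro l hl l' hl' heq
    simp only [Set.mem_Iic] at hl hl'
    rcases lt_trichotomy l l' with h|h|h
    · exact absurd heq (key l l' h hl')
    · exact h
    · exact absurd heq.symm (key l' l h hl)
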